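/- Fix an integer D ≥ 2, real numbers α > 0 and p ∈ (1,2), and k ∈ ℕ₀, and let ε̲, ε̄ and r₀ ∈ (1, min{p, D/(D−1)}) (the unique solution of ε̄(r₀) = ε̲(r₀)) be as in the context. Then for every r ∈ (1, r₀) and every ϵ ∈ (ε̲(r), ε̄(r)), setting r' = r/(r−1), ζ = (α/(2+α))·ϵ, ε = (2/(D+1))·(1 − ((2+3α)/(4+2α))·ϵ), and σ = ((A − D̂)·ϵ + E)/(B + C) with A = (2(r−1)/r)·(α/(2+α)), B = (2(r−1)/r)·(1−p/2), C = p/r − 1, D̂ = (2(D−1)/(r'(D+1)))·((2+3α)/(4+2α)), E = 2(D−1)/(r'(D+1)), all of ζ, ε, σ are strictly positive and the following seven quantities are strictly positive: (i) ϵα/2 − ζα/2 − σ(1−p/2); (ii) ζ − σ(1−p/2); (iii) 1 − ε(D+1)/2 − ϵ/2 − σ(1−p/2); (iv) σ(p/r − 1) − ε(D−1)/r'; (v) ε(1 − (D−1)/r') − ϵ/2; (vi) 1 − ϵ/2 − ε(D/r' + 1/r); (vii) 1 − ϵ(D + (k+1)/2) − D/r'. -/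

import Mathlib

/-- The lower threshold `ε̲(r)` from the parameter analysis. -/
noncomputable def elow (D : ℕ) (α p r : ℝ) : ℝ :=
  (4 + 2 * α) * (2 - p) * ((D : ℝ) - 1) * (r - 1) /
    (2 * α * ((D : ℝ) + 1) * (p - r) + (2 + 3 * α) * (2 - p) * ((D : ℝ) - 1) * (r - 1))

/-- The upper threshold `ε̄₁(r)`. -/
noncomputable def ebar1 (D : ℕ) (α r : ℝ) : ℝ :=
  (8 + 4 * α) /
    (4 + 6 * α + (2 + α) * ((D : ℝ) + 1) * r / ((D : ℝ) - 1 - ((D : ℝ) - 2) * r))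

/-- The upper threshold `ε̄₂(r)`. -/
noncomputable def ebar2 (D : ℕ) (k : ℕ) (r : ℝ) : ℝ :=
  ((D : ℝ) - ((D : ℝ) - 1) * r) / (((D : ℝ) + ((k : ℝ) + 1) / 2) * r)

/-- The upper threshold `ε̄(r) = min {ε̄₁(r), ε̄₂(r)}`. -/
noncomputable def ebar (D : ℕ) (α : ℝ) (k : ℕ) (r : ℝ) : ℝ :=
  min (ebar1 D α r) (ebar2 D k r)

/-- The conjugate exponent `r' = r/(r-1)`. -/
noncomputable def rprime (r : ℝ) : ℝ := r / (r - 1)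

/-- The parameter `ζ = (α/(2+α))·ϵ`. -/
noncomputable def zetaP (α ϵ : ℝ) : ℝ := α / (2 + α) * ϵ

/-- The parameter `ε = (2/(D+1))·(1 - ((2+3α)/(4+2α))·ϵ)`. -/
noncomputable def epsP (D : ℕ) (α ϵ : ℝ) : ℝ :=
  2 / ((D : ℝ) + 1) * (1 - (2 + 3 * α) / (4 + 2 * α) * ϵ)

/-- `A = (2(r-1)/r)·(α/(2+α))`. -/
noncomputable def AP (α r : ℝ) : ℝ := 2 * (r - 1) / r * (α / (2 + α))

/-- `B = (2(r-1)/r)·(1-p/2)`. -/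
noncomputable def BP (p r : ℝ) : ℝ := 2 * (r - 1) / r * (1 - p / 2)

/-- `C = p/r - 1`. -/
noncomputable def CP (p r : ℝ) : ℝ := p / r - 1

/-- `D̂ = (2(D-1)/(r'(D+1)))·((2+3α)/(4+2α))`. -/
noncomputable def DP (D : ℕ) (α r : ℝ) : ℝ :=
  2 * ((D : ℝ) - 1) / (rprime r * ((D : ℝ) + 1)) * ((2 + 3 * α) / (4 + 2 * α))

/-- `E = 2(D-1)/(r'(D+1))`. -/
noncomputable def EP (D : ℕ) (r : ℝ) : ℝ :=
  2 * ((D : ℝ) - 1) / (rprime r * ((D : ℝ) + 1))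

/-- The parameter `σ = ((A - D̂)·ϵ + E)/(B + C)`. -/
noncomputable def sigmaP (D : ℕ) (α p r ϵ : ℝ) : ℝ :=
  ((AP α r - DP D α r) * ϵ + EP D r) / (BP p r + CP p r)

set_option maxHeartbeats 4000000
set_option linter.all false

/-- With `r₀` the unique solution of `ε̄(r₀) = ε̲(r₀)` in
`(1, min {p, D/(D-1)})`, for every `r ∈ (1, r₀)` and every `ϵ ∈ (ε̲(r), ε̄(r))`, the
parameters `ζ, ε, σ` are strictly positive and the seven quantities (i)–(vii) of the
parameter system are strictly positive. -/
theorem stmt17 (D : ℕ) (hD : 2 ≤ D) (α p : ℝ) (hα : 0 < α)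
    (hp1 : 1 < p) (hp2 : p < 2) (k : ℕ)
    (r₀ : ℝ) (hr₀ : r₀ ∈ Set.Ioo (1 : ℝ) (min p ((D : ℝ) / ((D : ℝ) - 1))))
    (hzero : ebar D α k r₀ = elow D α p r₀) :
    ∀ r ∈ Set.Ioo (1 : ℝ) r₀, ∀ ϵ ∈ Set.Ioo (elow D α p r) (ebar D α k r),
      0 < zetaP α ϵ ∧ 0 < epsP D α ϵ ∧ 0 < sigmaP D α p r ϵ ∧
      0 < ϵ * α / 2 - zetaP α ϵ * α / 2 - sigmaP D α p r ϵ * (1 - p / 2) ∧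
      0 < zetaP α ϵ - sigmaP D α p r ϵ * (1 - p / 2) ∧
      0 < 1 - epsP D α ϵ * ((D : ℝ) + 1) / 2 - ϵ / 2 -
          sigmaP D α p r ϵ * (1 - p / 2) ∧
      0 < sigmaP D α p r ϵ * (p / r - 1) - epsP D α ϵ * ((D : ℝ) - 1) / rprime r ∧
      0 < epsP D α ϵ * (1 - ((D : ℝ) - 1) / rprime r) - ϵ / 2 ∧
      0 < 1 - ϵ / 2 - epsP D α ϵ * ((D : ℝ) / rprime r + 1 / r) ∧
      0 < 1 - ϵ * ((D : ℝ) + ((k : ℝ) + 1) / 2) - (D : ℝ) / rprime r := by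
  intro r hr ϵ hϵ
  obtain ⟨hr1, hrr₀⟩ := hr
  obtain ⟨hϵl, hϵu⟩ := hϵ
  have hd : (2:ℝ) ≤ (D:ℝ) := by exact_mod_cast hD
  have hrp : r < p := lt_trans hrr₀ (lt_of_lt_of_le hr₀.2 (min_le_left _ _))
  have hd1 : (0:ℝ) < (D:ℝ) - 1 := by linarith
  have hd1' : (0:ℝ) < (D:ℝ) + 1 := by linarith
  have hrD : ((D:ℝ)-1)*r < (D:ℝ) := by
    have h0 : r₀ < (D:ℝ)/((D:ℝ)-1) := lt_of_lt_of_le hr₀.2 (min_le_right _ _)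
    have h1 := (lt_div_iff₀ hd1).mp (lt_trans hrr₀ h0)
    linarith
  have hr0 : (0:ℝ) < r := by linarith
  have hs : (0:ℝ) < r - 1 := by linarith
  have hr2 : r < 2 := by linarith
  have h2r : (0:ℝ) < 2 - r := by linarith
  have hp1' : (0:ℝ) < p - 1 := by linarith
  have h2p : (0:ℝ) < 2 - p := by linarith
  have hpr : (0:ℝ) < p - r := by linarith
  have hQd : (0:ℝ) < (D:ℝ) - 1 - ((D:ℝ)-2)*r := by linarith
  have hα2 : (0:ℝ) < 2 + α := by linarith
  have hα4 : (0:ℝ) < 4 + 2*α := by linarith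
  have hα3 : (0:ℝ) < 2 + 3*α := by linarith
  have hk0 : (0:ℝ) ≤ (k:ℝ) := Nat.cast_nonneg k
  have hdk : (0:ℝ) < (D:ℝ) + ((k:ℝ)+1)/2 := by linarith
  -- extract the polynomial inequality from `elow r < ϵ`
  unfold elow at hϵl
  have hDe1 : (0:ℝ) < 2*α*((D:ℝ)+1)*(p-r) + (2+3*α)*(2-p)*((D:ℝ)-1)*(r-1) := by
    have t1 : (0:ℝ) < 2*α*((D:ℝ)+1)*(p-r) :=
      mul_pos (mul_pos (by linarith) hd1') hpr
    have t2 : (0:ℝ) < (2+3*α)*(2-p)*((D:ℝ)-1)*(r-1) :=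
      mul_pos (mul_pos (mul_pos hα3 h2p) hd1) hs
    linarith
  have h1num : (0:ℝ) < (4+2*α)*(2-p)*((D:ℝ)-1)*(r-1) :=
    mul_pos (mul_pos (mul_pos hα4 h2p) hd1) hs
  have hϵ0 : (0:ℝ) < ϵ := lt_trans (div_pos h1num hDe1) hϵl
  have h1 : (0:ℝ) < ϵ*(2*α*((D:ℝ)+1)*(p-r) + (2+3*α)*(2-p)*((D:ℝ)-1)*(r-1))
      - (4+2*α)*(2-p)*((D:ℝ)-1)*(r-1) := by
    have := (div_lt_iff₀ hDe1).mp hϵl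
    linarith
  -- extract the polynomial inequality from `ϵ < ebar1 r`
  unfold ebar at hϵu
  have hϵu1 : ϵ < ebar1 D α r := lt_of_lt_of_le hϵu (min_le_left _ _)
  have hϵu2 : ϵ < ebar2 D k r := lt_of_lt_of_le hϵu (min_le_right _ _)
  have hden2 : (0:ℝ) < (4+6*α)*((D:ℝ)-1-((D:ℝ)-2)*r) + (2+α)*((D:ℝ)+1)*r := by
    have t1 : (0:ℝ) < (4+6*α)*((D:ℝ)-1-((D:ℝ)-2)*r) := mul_pos (by linarith) hQd
    have t2 : (0:ℝ) < (2+α)*((D:ℝ)+1)*r := mul_pos (mul_pos hα2 hd1') hr0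
    linarith
  have hden2' : (4:ℝ)+6*α + (2+α)*((D:ℝ)+1)*r/((D:ℝ)-1-((D:ℝ)-2)*r) ≠ 0 := by
    have : (0:ℝ) < 4+6*α + (2+α)*((D:ℝ)+1)*r/((D:ℝ)-1-((D:ℝ)-2)*r) :=
      add_pos (by linarith) (div_pos (mul_pos (mul_pos hα2 hd1') hr0) hQd)
    exact this.ne'
  have heb1 : ebar1 D α r = (8+4*α)*((D:ℝ)-1-((D:ℝ)-2)*r) /
      ((4+6*α)*((D:ℝ)-1-((D:ℝ)-2)*r) + (2+α)*((D:ℝ)+1)*r) := by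
    unfold ebar1
    rw [div_eq_div_iff hden2' hden2.ne']
    field_simp
  rw [heb1] at hϵu1
  have h2 : (0:ℝ) < (8+4*α)*((D:ℝ)-1-((D:ℝ)-2)*r)
      - ϵ*((4+6*α)*((D:ℝ)-1-((D:ℝ)-2)*r) + (2+α)*((D:ℝ)+1)*r) := by
    have := (lt_div_iff₀ hden2).mp hϵu1
    linarith
  -- extract the polynomial inequality from `ϵ < ebar2 r`
  unfold ebar2 at hϵu2
  have hden3 : (0:ℝ) < ((D:ℝ)+((k:ℝ)+1)/2)*r := mul_pos hdk hr0
  have h3 : (0:ℝ) < ((D:ℝ) - ((D:ℝ)-1)*r) - ϵ*(((D:ℝ)+((k:ℝ)+1)/2)*r) := by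
    have := (lt_div_iff₀ hden3).mp hϵu2
    linarith
  -- consequences
  have hcϵ : (2+3*α)*ϵ < 4+2*α := by
    have t : (0:ℝ) < ϵ*((2+α)*((D:ℝ)+1)*r) :=
      mul_pos hϵ0 (mul_pos (mul_pos hα2 hd1') hr0)
    have t2 : (0:ℝ) < ((8+4*α) - (4+6*α)*ϵ) * ((D:ℝ)-1-((D:ℝ)-2)*r) := by
      linarith [h2, t]
    rcases mul_pos_iff.mp t2 with ⟨h', _⟩ | ⟨_, h'⟩
    · linarith
    · linarith
  have hϵ2 : ϵ < 2 := by
    have h' : ϵ < (4+2*α)/(2+3*α) := (lt_div_iff₀ hα3).mpr (by linarith)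
    have h'' : (4+2*α)/(2+3*α) ≤ 2 := by
      rw [div_le_iff₀ hα3]; linarith
    linarith
  -- sigma as an explicit fraction
  have hBC : BP p r + CP p r = (2-r)*(p-1)/r := by
    unfold BP CP
    field_simp
    ring
  have hσ : sigmaP D α p r ϵ =
      (2*(r-1)*(α*((D:ℝ)+1)*(4+2*α)*ϵ + ((D:ℝ)-1)*(2+α)*((4+2*α)-(2+3*α)*ϵ))) /
      ((2-r)*(p-1)*((D:ℝ)+1)*(2+α)*(4+2*α)) := by
    unfold sigmaP
    rw [hBC]
    unfold AP DP EP rprime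
    field_simp
    ring
  have hQσ : (0:ℝ) < (2-r)*(p-1)*((D:ℝ)+1)*(2+α)*(4+2*α) :=
    mul_pos (mul_pos (mul_pos (mul_pos h2r hp1') hd1') hα2) hα4
  have hPσ : (0:ℝ) <
      2*(r-1)*(α*((D:ℝ)+1)*(4+2*α)*ϵ + ((D:ℝ)-1)*(2+α)*((4+2*α)-(2+3*α)*ϵ)) := by
    have t1 : (0:ℝ) < α*((D:ℝ)+1)*(4+2*α)*ϵ :=
      mul_pos (mul_pos (mul_pos hα hd1') hα4) hϵ0
    have t2 : (0:ℝ) < ((D:ℝ)-1)*(2+α)*((4+2*α)-(2+3*α)*ϵ) :=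
      mul_pos (mul_pos hd1 hα2) (by linarith)
    exact mul_pos (by linarith : (0:ℝ) < 2*(r-1)) (add_pos t1 t2)
  have hP2 : (0:ℝ) < (2+α)*(ϵ*(2*α*((D:ℝ)+1)*(p-r) + (2+3*α)*(2-p)*((D:ℝ)-1)*(r-1))
      - (4+2*α)*(2-p)*((D:ℝ)-1)*(r-1)) := mul_pos hα2 h1
  refine ⟨?_, ?_, ?_, ?_, ?_, ?_, ?_, ?_, ?_, ?_⟩
  · exact mul_pos (div_pos hα hα2) hϵ0
  · have e : epsP D α ϵ = (2*((4+2*α)-(2+3*α)*ϵ))/(((D:ℝ)+1)*(4+2*α)) := by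
      unfold epsP
      field_simp
    rw [e]
    exact div_pos (by linarith) (mul_pos hd1' hα4)
  · rw [hσ]
    exact div_pos hPσ hQσ
  · have e : ϵ * α / 2 - zetaP α ϵ * α / 2 - sigmaP D α p r ϵ * (1 - p / 2) =
        ((2+α)*(ϵ*(2*α*((D:ℝ)+1)*(p-r) + (2+3*α)*(2-p)*((D:ℝ)-1)*(r-1))
          - (4+2*α)*(2-p)*((D:ℝ)-1)*(r-1))) /
        ((2-r)*(p-1)*((D:ℝ)+1)*(2+α)*(4+2*α)) := by
      rw [hσ]
      unfold zetaP
      field_simp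
      ring
    rw [e]
    exact div_pos hP2 hQσ
  · have e : zetaP α ϵ - sigmaP D α p r ϵ * (1 - p / 2) =
        ((2+α)*(ϵ*(2*α*((D:ℝ)+1)*(p-r) + (2+3*α)*(2-p)*((D:ℝ)-1)*(r-1))
          - (4+2*α)*(2-p)*((D:ℝ)-1)*(r-1))) /
        ((2-r)*(p-1)*((D:ℝ)+1)*(2+α)*(4+2*α)) := by
      rw [hσ]
      unfold zetaP
      field_simp
      ring
    rw [e]
    exact div_pos hP2 hQσ
  · have e : 1 - epsP D α ϵ * ((D : ℝ) + 1) / 2 - ϵ / 2 -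
        sigmaP D α p r ϵ * (1 - p / 2) =
        ((2+α)*(ϵ*(2*α*((D:ℝ)+1)*(p-r) + (2+3*α)*(2-p)*((D:ℝ)-1)*(r-1))
          - (4+2*α)*(2-p)*((D:ℝ)-1)*(r-1))) /
        ((2-r)*(p-1)*((D:ℝ)+1)*(2+α)*(4+2*α)) := by
      rw [hσ]
      unfold epsP
      field_simp
      ring
    rw [e]
    exact div_pos hP2 hQσ
  · have e : sigmaP D α p r ϵ * (p / r - 1) - epsP D α ϵ * ((D : ℝ) - 1) / rprime r =
        (2*(r-1)*((2+α)*(ϵ*(2*α*((D:ℝ)+1)*(p-r) + (2+3*α)*(2-p)*((D:ℝ)-1)*(r-1))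
          - (4+2*α)*(2-p)*((D:ℝ)-1)*(r-1)))) /
        (r*((2-r)*(p-1)*((D:ℝ)+1)*(2+α)*(4+2*α))) := by
      rw [hσ]
      unfold epsP rprime
      field_simp
      ring
    rw [e]
    exact div_pos (mul_pos (by linarith) hP2) (mul_pos hr0 hQσ)
  · have e : epsP D α ϵ * (1 - ((D : ℝ) - 1) / rprime r) - ϵ / 2 =
        ((8+4*α)*((D:ℝ)-1-((D:ℝ)-2)*r)
          - ϵ*((4+6*α)*((D:ℝ)-1-((D:ℝ)-2)*r) + (2+α)*((D:ℝ)+1)*r)) /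
        (r*((D:ℝ)+1)*(4+2*α)) := by
      unfold epsP rprime
      field_simp
      ring
    rw [e]
    exact div_pos h2 (mul_pos (mul_pos hr0 hd1') hα4)
  · have e : 1 - ϵ / 2 - epsP D α ϵ * ((D : ℝ) / rprime r + 1 / r) =
        ((4+2*α)*(((D:ℝ)-1)*((2-r)*(2-ϵ))) + 8*α*(ϵ*((D:ℝ)*r-(D:ℝ)+1))) /
        (2*r*((D:ℝ)+1)*(4+2*α)) := by
      unfold epsP rprime
      field_simp
      ring
    rw [e]
    have hdr : (0:ℝ) < (D:ℝ)*r-(D:ℝ)+1 := by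
      linarith [mul_pos (by linarith : (0:ℝ) < (D:ℝ)) hs]
    exact div_pos
      (add_pos (mul_pos hα4 (mul_pos hd1 (mul_pos h2r (by linarith))))
        (mul_pos (by linarith) (mul_pos hϵ0 hdr)))
      (mul_pos (mul_pos (by linarith) hd1') hα4)
  · have e : 1 - ϵ * ((D : ℝ) + ((k : ℝ) + 1) / 2) - (D : ℝ) / rprime r =
        (((D:ℝ) - ((D:ℝ)-1)*r) - ϵ*(((D:ℝ)+((k:ℝ)+1)/2)*r)) / r := by
      unfold rprime
      field_simp
      ring
    rw [e]
    exact div_pos h3 hr0
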